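/- Division is impossible in the ring of formal differential operators adapted to certain weight vectors: in the Weyl-type ring k[[x]]⟨∂⟩ in one variable with relation ∂x = x∂ + 1, let g = x + x^k ∂ for k ≥ 2. There do not exist q, r in k[[x]]⟨∂⟩ with x = q·g + r such that no monomial of r is divisible by x. -/

import Mathlib

noncomputable section

open Finset

namespace NoDivAux

variable {K : Type*} [Field K] {A : Type*} [Ring A]

/-- Leibniz-type commutation: `D^n * ι a = ι a * D^n + lower order terms`. -/
lemma leib (ι : PowerSeries K →+* A) (D : A)
    (hrel : ∀ a : PowerSeries K, D * ι a = ι a * D + ι (PowerSeries.derivativeFun a)) :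
    ∀ (n : ℕ) (a : PowerSeries K), ∃ g : ℕ → PowerSeries K,
      D ^ n * ι a = ι a * D ^ n + ∑ β ∈ Finset.range n, ι (g β) * D ^ β := by
  intro n
  induction n with
  | zero => intro a; exact ⟨0, by simp⟩
  | succ n ih =>
    intro a
    obtain ⟨g, hg⟩ := ih a
    set d := fun b : PowerSeries K => PowerSeries.derivativeFun b with hd
    refine ⟨fun γ => (if γ = n then d a else 0) + (if γ = 0 then 0 else g (γ - 1))
      + (if γ < n then d (g γ) else 0), ?_⟩
    have h1 : D ^ (n + 1) * ι a = D * (D ^ n * ι a) := by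
      rw [pow_succ', mul_assoc]
    rw [h1, hg, mul_add, Finset.mul_sum]
    have h2 : D * (ι a * D ^ n) = ι a * D ^ (n+1) + ι (d a) * D ^ n := by
      rw [← mul_assoc, hrel a, add_mul, mul_assoc, ← pow_succ']
    have h3 : ∀ β, D * (ι (g β) * D ^ β) = ι (g β) * D ^ (β+1) + ι (d (g β)) * D ^ β := by
      intro β
      rw [← mul_assoc, hrel (g β), add_mul, mul_assoc, ← pow_succ']
    rw [h2]
    rw [Finset.sum_congr rfl (fun β _ => h3 β), Finset.sum_add_distrib]
    -- now RHS target
    have hsplit : ∀ γ ∈ Finset.range (n+1),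
        ι ((if γ = n then d a else 0) + (if γ = 0 then 0 else g (γ - 1))
          + (if γ < n then d (g γ) else 0)) * D ^ γ
        = ι (if γ = n then d a else 0) * D ^ γ + ι (if γ = 0 then 0 else g (γ - 1)) * D ^ γ
          + ι (if γ < n then d (g γ) else 0) * D ^ γ := by
      intro γ _; rw [map_add, map_add, add_mul, add_mul]
    rw [Finset.sum_congr rfl hsplit, Finset.sum_add_distrib, Finset.sum_add_distrib]
    have e1 : ∑ γ ∈ Finset.range (n+1), ι (if γ = n then d a else 0) * D ^ γ
        = ι (d a) * D ^ n := by
      rw [Finset.sum_eq_single n (fun γ _ hγ => by rw [if_neg hγ]; simp)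
        (fun h => absurd (Finset.self_mem_range_succ n) h)]
      rw [if_pos rfl]
    have e2 : ∑ γ ∈ Finset.range (n+1), ι (if γ = 0 then 0 else g (γ - 1)) * D ^ γ
        = ∑ β ∈ Finset.range n, ι (g β) * D ^ (β + 1) := by
      rw [Finset.sum_range_succ']
      simp
    have e3 : ∑ γ ∈ Finset.range (n+1), ι (if γ < n then d (g γ) else 0) * D ^ γ
        = ∑ γ ∈ Finset.range n, ι (d (g γ)) * D ^ γ := by
      rw [Finset.sum_range_succ, if_neg (lt_irrefl n)]
      simp only [map_zero, zero_mul, add_zero]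
      exact Finset.sum_congr rfl fun γ hγ => by rw [if_pos (Finset.mem_range.1 hγ)]
    rw [e1, e2, e3]
    abel


/-- Multiplying a representation on the right by `ι a` keeps the `D`-degree and
the top coefficient becomes `f (n-1) * a`. -/
lemma repMul (ι : PowerSeries K →+* A) (D : A)
    (hrel : ∀ a : PowerSeries K, D * ι a = ι a * D + ι (PowerSeries.derivativeFun a))
    (n : ℕ) (f : ℕ → PowerSeries K) (a : PowerSeries K) :
    ∃ h : ℕ → PowerSeries K,
      (∑ β ∈ Finset.range n, ι (f β) * D ^ β) * ι a
        = ∑ β ∈ Finset.range n, ι (h β) * D ^ β ∧ (1 ≤ n → h (n - 1) = f (n - 1) * a) := by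
  choose g hg using fun β => leib ι D hrel β a
  refine ⟨fun β => f β * a + ∑ γ ∈ Finset.range n, (if β < γ then f γ * g γ β else 0),
    ?_, ?_⟩
  · rw [Finset.sum_mul]
    have step : ∀ β ∈ Finset.range n, ι (f β) * D ^ β * ι a
        = ι (f β * a) * D ^ β + ∑ γ ∈ Finset.range n,
            ι (if γ < β then f β * g β γ else 0) * D ^ γ := by
      intro β hβ
      rw [mul_assoc, hg β, mul_add, ← mul_assoc, ← map_mul]
      congr 1
      rw [Finset.mul_sum]
      have hc : ∀ i ∈ Finset.range β, ι (f β) * (ι (g β i) * D ^ i)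
          = ι (if i < β then f β * g β i else 0) * D ^ i := fun i hi => by
        rw [if_pos (Finset.mem_range.1 hi), map_mul, mul_assoc]
      rw [Finset.sum_congr rfl hc]
      exact Finset.sum_subset (Finset.range_subset_range.2 (le_of_lt (Finset.mem_range.1 hβ)))
        (fun γ _ hγ => by rw [if_neg (fun hcc => hγ (Finset.mem_range.2 hcc))]; simp)
    rw [Finset.sum_congr rfl step, Finset.sum_add_distrib, Finset.sum_comm]
    have merge : ∀ β ∈ Finset.range n,
        ι (f β * a) * D ^ β + ∑ γ ∈ Finset.range n,
            ι (if β < γ then f γ * g γ β else 0) * D ^ β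
        = ι (f β * a + ∑ γ ∈ Finset.range n, (if β < γ then f γ * g γ β else 0)) * D ^ β := by
      intro β _
      rw [map_add, add_mul, ← Finset.sum_mul, ← map_sum]
    rw [← Finset.sum_congr rfl merge, Finset.sum_add_distrib]
  · intro hn
    show f (n-1) * a + (∑ γ ∈ Finset.range n, if n - 1 < γ then f γ * g γ (n-1) else 0)
      = f (n-1) * a
    rw [Finset.sum_eq_zero, add_zero]
    intro γ hγ
    rw [if_neg (by have := Finset.mem_range.1 hγ; omega)]

/-- Uniqueness of representations, in `Finset.range` form. -/
lemma uniq (ι : PowerSeries K →+* A) (D : A)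
    (hrep : ∀ P : A, ∃! c : ℕ →₀ PowerSeries K, P = c.sum fun β a => ι a * D ^ β)
    (n : ℕ) (f g : ℕ → PowerSeries K)
    (hfg : (∑ β ∈ Finset.range n, ι (f β) * D ^ β)
      = ∑ β ∈ Finset.range n, ι (g β) * D ^ β) :
    ∀ β < n, f β = g β := by
  have key : ∀ u : ℕ → PowerSeries K,
      (∑ β ∈ Finset.range n, ι (u β) * D ^ β)
        = (Finsupp.onFinset (Finset.range n)
            (fun β => if β < n then u β else 0)
            (fun β hb => Finset.mem_range.2 (by by_contra hc; simp [hc] at hb))).sum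
          (fun β a => ι a * D ^ β) := by
    intro u
    rw [Finsupp.sum_of_support_subset _ Finsupp.support_onFinset_subset _
      (fun β _ => by simp)]
    refine Finset.sum_congr rfl fun β hβ => ?_
    rw [Finsupp.onFinset_apply, if_pos (Finset.mem_range.1 hβ)]
  obtain ⟨c0, _, hun⟩ := hrep (∑ β ∈ Finset.range n, ι (f β) * D ^ β)
  have h1 := hun _ (key f)
  have h2 := hun _ (by rw [hfg]; exact key g)
  intro β hβ
  have := congrArg (fun c : ℕ →₀ PowerSeries K => c β) (h1.trans h2.symm)
  simpa [Finsupp.onFinset_apply, if_pos hβ] using this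

end NoDivAux

open NoDivAux

/-- Impossibility of division in the ring `k[[x]]⟨∂⟩` of formal differential operators in one
variable adapted to certain weight vectors.  The ring is presented abstractly: a ring `A`, a
ring map `ι : k[[x]] → A`, and an element `D ∈ A` (the derivation `∂`) satisfying the
commutation rule `D·ι(a) = ι(a)·D + ι(a')`, such that every element of `A` is uniquely a
finite sum `Σ_β ι(a_β)·D^β`.  For `g = x + x^k ∂` with `k ≥ 2`, there are no `q, r ∈ A` with
`x = q·g + r` such that no monomial of `r` is divisible by `x` (i.e. all the coefficient
series of `r` are constants). -/
theorem no_division_in_formal_differential_operators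
    {K : Type*} [Field K] {A : Type*} [Ring A]
    (ι : PowerSeries K →+* A) (D : A)
    (hrel : ∀ a : PowerSeries K, D * ι a = ι a * D + ι (PowerSeries.derivativeFun a))
    (hrep : ∀ P : A, ∃! c : ℕ →₀ PowerSeries K, P = c.sum fun β a => ι a * D ^ β)
    (k : ℕ) (hk : 2 ≤ k) :
    ¬ ∃ (q r : A) (c : ℕ →₀ PowerSeries K),
        ι PowerSeries.X = q * (ι PowerSeries.X + ι (PowerSeries.X ^ k) * D) + r ∧
        r = c.sum (fun β a => ι a * D ^ β) ∧
        ∀ β : ℕ, ∀ α : ℕ, 1 ≤ α → PowerSeries.coeff α (c β) = 0 := by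
  rintro ⟨q, r, c, heq, hr, hconst⟩
  -- generic facts
  have fsum : ∀ (c' : ℕ →₀ PowerSeries K) (M : ℕ), c'.support ⊆ Finset.range M →
      c'.sum (fun β a => ι a * D ^ β) = ∑ β ∈ Finset.range M, ι (c' β) * D ^ β := by
    intro c' M hM
    exact Finsupp.sum_of_support_subset _ hM _ (fun β _ => by simp)
  have pad : ∀ (N M : ℕ) (u : ℕ → PowerSeries K), N ≤ M →
      ∑ γ ∈ Finset.range M, ι (if γ < N then u γ else 0) * D ^ γ
        = ∑ γ ∈ Finset.range N, ι (u γ) * D ^ γ := by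
    intro N M u h
    rw [← Finset.sum_subset (Finset.range_subset_range.2 h)
      (fun γ _ hγ => by rw [if_neg (fun hc => hγ (Finset.mem_range.2 hc))]; simp)]
    exact Finset.sum_congr rfl fun γ hγ => by rw [if_pos (Finset.mem_range.1 hγ)]
  have gsum : ∀ M, 1 ≤ M →
      ∑ γ ∈ Finset.range M, ι (if γ = 0 then (PowerSeries.X : PowerSeries K) else 0) * D ^ γ
        = ι PowerSeries.X := by
    intro M hM
    rw [Finset.sum_eq_single 0 (fun γ _ hγ => by rw [if_neg hγ]; simp)
      (fun h => absurd (Finset.mem_range.2 hM) h)]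
    simp
  obtain ⟨qc, hq, -⟩ := hrep q
  obtain ⟨m0, hm0⟩ := Finset.exists_nat_subset_range c.support
  by_cases hqc : qc = 0
  · -- q = 0, so ι X = r has constant coefficients: contradiction at β = 0
    have hq0 : q = 0 := by rw [hq, hqc]; simp
    have hXr : ι PowerSeries.X = r := by rw [heq, hq0]; simp
    set M := max m0 1 with hM
    have hcM : c.support ⊆ Finset.range M :=
      hm0.trans (Finset.range_subset_range.2 (le_max_left _ _))
    have e1 : ∑ γ ∈ Finset.range M, ι (c γ) * D ^ γ
        = ∑ γ ∈ Finset.range M, ι (if γ = 0 then (PowerSeries.X : PowerSeries K) else 0) * D ^ γ := by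
      rw [gsum M (le_max_right _ _), ← fsum c M hcM, ← hr, hXr]
    have hc0 : c 0 = PowerSeries.X :=
      uniq ι D hrep M _ _ e1 0 (lt_of_lt_of_le one_pos (le_max_right _ _))
    have := hconst 0 1 le_rfl
    rw [hc0, PowerSeries.coeff_one_X] at this
    exact one_ne_zero this
  · -- q ≠ 0 : top-degree contradiction
    have hne : qc.support.Nonempty := Finsupp.support_nonempty_iff.2 hqc
    set t := qc.support.max' hne with ht
    set N := t + 1 with hN
    have hsupN : qc.support ⊆ Finset.range N := fun β hβ =>
      Finset.mem_range.2 (Nat.lt_succ_of_le (Finset.le_max' _ _ hβ))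
    have hqN : q = ∑ β ∈ Finset.range N, ι (qc β) * D ^ β := by
      rw [hq]; exact fsum qc N hsupN
    obtain ⟨h1f, hh1, -⟩ := repMul ι D hrel N (fun β => qc β) PowerSeries.X
    obtain ⟨h2f, hh2, htop2⟩ := repMul ι D hrel N (fun β => qc β) (PowerSeries.X ^ k)
    have hq1 : q * ι PowerSeries.X = ∑ β ∈ Finset.range N, ι (h1f β) * D ^ β := by
      rw [hqN]; exact hh1
    have hq2 : q * ι (PowerSeries.X ^ k) * D
        = ∑ β ∈ Finset.range N, ι (h2f β) * D ^ (β + 1) := by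
      rw [hqN, hh2, Finset.sum_mul]
      exact Finset.sum_congr rfl fun β _ => by rw [mul_assoc, ← pow_succ]
    set M := max (N + 1) m0 with hM
    have hNM : N + 1 ≤ M := le_max_left _ _
    have hcM : c.support ⊆ Finset.range M :=
      hm0.trans (Finset.range_subset_range.2 (le_max_right _ _))
    set F : ℕ → PowerSeries K := fun γ =>
      (if γ < N then h1f γ else 0)
        + (if γ = 0 then 0 else if γ - 1 < N then h2f (γ - 1) else 0) + c γ with hF
    have hFsum : ∑ γ ∈ Finset.range M, ι (F γ) * D ^ γ = ι PowerSeries.X := by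
      have split : ∀ γ ∈ Finset.range M, ι (F γ) * D ^ γ
          = ι (if γ < N then h1f γ else 0) * D ^ γ
            + ι (if γ = 0 then 0 else if γ - 1 < N then h2f (γ - 1) else 0) * D ^ γ
            + ι (c γ) * D ^ γ := fun γ _ => by
        rw [hF]; rw [map_add, map_add, add_mul, add_mul]
      rw [Finset.sum_congr rfl split, Finset.sum_add_distrib, Finset.sum_add_distrib]
      have s1 : ∑ γ ∈ Finset.range M, ι (if γ < N then h1f γ else 0) * D ^ γ
          = q * ι PowerSeries.X := by
        rw [pad N M h1f (le_trans (Nat.le_succ N) hNM), hq1]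
      have s2 : ∑ γ ∈ Finset.range M,
            ι (if γ = 0 then 0 else if γ - 1 < N then h2f (γ - 1) else 0) * D ^ γ
          = q * ι (PowerSeries.X ^ k) * D := by
        rw [← Finset.sum_subset (Finset.range_subset_range.2 hNM) (fun γ _ hγ => by
          have hγ' : ¬ γ < N + 1 := fun hc => hγ (Finset.mem_range.2 hc)
          rw [if_neg (by omega), if_neg (by omega)]
          simp)]
        rw [Finset.sum_range_succ']
        have hcg : ∀ i ∈ Finset.range N,
            ι (if i + 1 = 0 then 0 else if i + 1 - 1 < N then h2f (i + 1 - 1) else 0) * D ^ (i + 1)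
            = ι (h2f i) * D ^ (i + 1) := fun i hi => by
          rw [if_neg (Nat.succ_ne_zero i), Nat.add_sub_cancel,
            if_pos (Finset.mem_range.1 hi)]
        rw [Finset.sum_congr rfl hcg, if_pos rfl]
        simp only [map_zero, zero_mul, add_zero]
        exact hq2.symm
      have s3 : ∑ γ ∈ Finset.range M, ι (c γ) * D ^ γ = r := by
        rw [← fsum c M hcM, ← hr]
      rw [s1, s2, s3]
      calc q * ι PowerSeries.X + q * ι (PowerSeries.X ^ k) * D + r
          = q * (ι PowerSeries.X + ι (PowerSeries.X ^ k) * D) + r := by noncomm_ring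
        _ = ι PowerSeries.X := heq.symm
    have e1 : ∑ γ ∈ Finset.range M, ι (F γ) * D ^ γ
        = ∑ γ ∈ Finset.range M, ι (if γ = 0 then (PowerSeries.X : PowerSeries K) else 0) * D ^ γ := by
      rw [hFsum, gsum M (by omega)]
    have hFN : F N = 0 := by
      have h := uniq ι D hrep M _ _ e1 N (by omega)
      rw [if_neg (by omega : ¬ N = 0)] at h
      exact h
    have hkey : qc t * PowerSeries.X ^ k + c N = 0 := by
      have h2 : F N = h2f t + c N := by
        show ((if N < N then h1f N else 0)
            + if N = 0 then 0 else if N - 1 < N then h2f (N - 1) else 0) + c N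
          = h2f t + c N
        rw [if_neg (lt_irrefl N), if_neg (by omega : ¬ N = 0),
          if_pos (by omega : N - 1 < N)]
        have hNt : N - 1 = t := by omega
        rw [hNt, zero_add]
      have h3 : h2f t = qc t * PowerSeries.X ^ k := by
        have := htop2 (by omega)
        rw [(by omega : N - 1 = t)] at this
        simpa using this
      rw [← h3, ← h2, hFN]
    have hqt0 : qc t = 0 := by
      ext m
      have h4 : qc t * PowerSeries.X ^ k = -(c N) := by
        rw [eq_neg_iff_add_eq_zero]; exact hkey
      have h5 : PowerSeries.coeff m (qc t)
          = PowerSeries.coeff (m + k) (qc t * PowerSeries.X ^ k) :=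
        (PowerSeries.coeff_mul_X_pow _ k m).symm
      rw [h5, h4, map_neg, hconst N (m + k) (by omega), neg_zero]
      simp
    exact (Finsupp.mem_support_iff.1 (qc.support.max'_mem hne)) hqt0
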